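/- The commutative reduction relation of Q* is strongly normalizing: there is no infinite sequence of terms M₁ →_K M₂ →_K M₃ →_K ⋯ where each step is a left-commutation L((λπ.M)N) → (λπ.LM)N or right-commutation ((λπ.M)N)L → (λπ.ML)N rewrite (applied in any surface context). -/
import Mathlib


/-- Patterns of the quantum lambda calculus Q*: a classical variable, a tuple of
classical variables (represented here by pairs), or a banged variable. -/
inductive Pat where
  | pvar : ℕ → Pat
  | ptuple : ℕ → ℕ → Pat
  | pbang : ℕ → Pat
deriving DecidableEq

/-- Terms of the quantum lambda calculus Q*. -/
inductive Tm where
  | cvar : ℕ → Tm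
  | qvar : ℕ → Tm
  | bang : Tm → Tm
  | bconst : Bool → Tm
  | uop : ℕ → Tm
  | new : Tm → Tm
  | app : Tm → Tm → Tm
  | meas : Tm → Tm
  | ite : Tm → Tm → Tm → Tm
  | pair : Tm → Tm → Tm
  | lam : Pat → Tm → Tm
deriving DecidableEq

/-- The commutative reduction rules `K = {l.cm, r.cm}` of Q*, closed under all
surface contexts (not under `!`, and not in the branches of `if`). -/
inductive KStep : Tm → Tm → Prop where
  | lcm (L : Tm) (p : Pat) (M N : Tm) :
      KStep (.app L (.app (.lam p M) N)) (.app (.lam p (.app L M)) N)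
  | rcm (L : Tm) (p : Pat) (M N : Tm) :
      KStep (.app (.app (.lam p M) N) L) (.app (.lam p (.app M L)) N)
  | appL {M M' : Tm} (N : Tm) : KStep M M' → KStep (.app M N) (.app M' N)
  | appR {N N' : Tm} (M : Tm) : KStep N N' → KStep (.app M N) (.app M N')
  | pairL {M M' : Tm} (N : Tm) : KStep M M' → KStep (.pair M N) (.pair M' N)
  | pairR {N N' : Tm} (M : Tm) : KStep N N' → KStep (.pair M N) (.pair M N')
  | inNew {M M' : Tm} : KStep M M' → KStep (.new M) (.new M')
  | inMeas {M M' : Tm} : KStep M M' → KStep (.meas M) (.meas M')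
  | inIf {M M' : Tm} (N L : Tm) : KStep M M' → KStep (.ite M N L) (.ite M' N L)
  | inLam {M M' : Tm} (p : Pat) : KStep M M' → KStep (.lam p M) (.lam p M')


/-- Polynomial interpretation measure: `app` is product, `lam` is successor. -/
def mu : Tm → ℕ
  | .cvar _ => 2
  | .qvar _ => 2
  | .bang _ => 2
  | .bconst _ => 2
  | .uop _ => 2
  | .new M => mu M + 1
  | .app M N => mu M * mu N
  | .meas M => mu M + 1
  | .ite M _ _ => mu M + 1
  | .pair M N => mu M + mu N
  | .lam _ M => mu M + 1

lemma mu_ge_two : ∀ t : Tm, 2 ≤ mu t := by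
  intro t
  induction t with
  | app M N ihM ihN => simp only [mu]; nlinarith
  | pair M N ihM ihN => simp only [mu]; omega
  | ite M N L ihM _ _ => simp only [mu]; omega
  | new M ih => simp only [mu]; omega
  | meas M ih => simp only [mu]; omega
  | lam p M ih => simp only [mu]; omega
  | _ => simp [mu]

lemma mu_dec {M M' : Tm} (h : KStep M M') : mu M' < mu M := by
  induction h with
  | lcm L p M N =>
      have hL := mu_ge_two L
      have hN := mu_ge_two N
      simp only [mu]
      nlinarith
  | rcm L p M N =>
      have hL := mu_ge_two L
      have hN := mu_ge_two N
      simp only [mu]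
      nlinarith
  | appL N _ ih =>
      have hN := mu_ge_two N
      simp only [mu]
      exact Nat.mul_lt_mul_of_lt_of_le ih le_rfl (by omega)
  | appR M _ ih =>
      have hM := mu_ge_two M
      exact Nat.mul_lt_mul_of_le_of_lt le_rfl ih (by omega)
  | pairL N _ ih => simpa [mu] using ih
  | pairR M _ ih => simpa [mu] using ih
  | inNew _ ih => simpa [mu] using ih
  | inMeas _ ih => simpa [mu] using ih
  | inIf N L _ ih => simpa [mu] using ih
  | inLam p _ ih => simpa [mu] using ih

/-- The commutative reduction relation of Q* is strongly normalizing. -/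
theorem kstep_strongly_normalizing :
    ¬ ∃ f : ℕ → Tm, ∀ n : ℕ, KStep (f n) (f (n + 1)) := by
  rintro ⟨f, hf⟩
  have key : ∀ n : ℕ, mu (f n) + n ≤ mu (f 0) := by
    intro n
    induction n with
    | zero => simp
    | succ k ih =>
        have := mu_dec (hf k)
        omega
  have := key (mu (f 0) + 1)
  have := mu_ge_two (f (mu (f 0) + 1))
  omega
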